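/- Let E be a real Hilbert space, γ > 0, and 0 < μ ≤ 1/γ. Let (L_t)_{t ∈ ℕ} be a sequence of differentiable functions L_t : E → ℝ whose gradients ∇L_t are all γ-Lipschitz, let (v_t)_{t ∈ ℕ} be a sequence in E, and define θ_{t+1} := θ_t − μ·v_t from an initial point θ_0 ∈ E. Assume that for every t, L_{t+1}(θ_{t+1}) ≤ L_t(θ_{t+1}). Then for every T ≥ 1, L_T(θ_T) − L_0(θ_0) ≤ −(μ/2)·Σ_{t=0}^{T−1} ( ‖∇L_t(θ_t)‖² − ‖v_t − ∇L_t(θ_t)‖² ). (Telescoping descent inequality for gradient descent with time-varying loss functions, from the proof of the convergence theorem.) -/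

import Mathlib

open Finset

/-- Descent lemma: for a differentiable function with `γ`-Lipschitz gradient,
`f (x + d) ≤ f x + ⟪∇f x, d⟫ + γ/2 ‖d‖²`. -/
lemma descent_lemma
    {E : Type*} [NormedAddCommGroup E] [InnerProductSpace ℝ E] [CompleteSpace E]
    (γ : ℝ) (hγ : 0 ≤ γ) (f : E → ℝ) (hf : Differentiable ℝ f)
    (hlip : ∀ x y : E, ‖gradient f x - gradient f y‖ ≤ γ * ‖x - y‖)
    (x d : E) :
    f (x + d) ≤ f x + inner ℝ (gradient f x) d + γ / 2 * ‖d‖ ^ 2 := by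
  set g : E → E := gradient f with hg
  set φ : ℝ → ℝ := fun s => γ / 2 * s ^ 2 * ‖d‖ ^ 2 + s * inner ℝ (g x) d - f (x + s • d)
    with hφ
  have hline : ∀ s : ℝ, HasDerivAt (fun s : ℝ => x + s • d) d s := by
    intro s
    simpa using ((hasDerivAt_id s).smul_const d).const_add x
  have hderiv : ∀ s : ℝ, HasDerivAt φ
      (γ * s * ‖d‖ ^ 2 + inner ℝ (g x) d - inner ℝ (g (x + s • d)) d) s := by
    intro s
    have h2 : HasFDerivAt f (InnerProductSpace.toDual ℝ E (g (x + s • d))) (x + s • d) :=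
      (hf (x + s • d)).hasGradientAt.hasFDerivAt
    have h3 : HasDerivAt (fun s : ℝ => f (x + s • d))
        (inner ℝ (g (x + s • d)) d) s := by
      have := h2.comp_hasDerivAt s (hline s)
      simp only [InnerProductSpace.toDual_apply_apply] at this
      exact this
    have h4 : HasDerivAt (fun s : ℝ => γ / 2 * s ^ 2 * ‖d‖ ^ 2 + s * inner ℝ (g x) d)
        (γ * s * ‖d‖ ^ 2 + inner ℝ (g x) d) s := by
      have ha : HasDerivAt (fun s : ℝ => γ / 2 * s ^ 2 * ‖d‖ ^ 2)
          (γ * s * ‖d‖ ^ 2) s := by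
        have := ((hasDerivAt_pow 2 s).const_mul (γ / 2)).mul_const (‖d‖ ^ 2)
        exact this.congr_deriv (by ring)
      have hb : HasDerivAt (fun s : ℝ => s * inner ℝ (g x) d) (inner ℝ (g x) d : ℝ) s := by
        simpa using (hasDerivAt_id s).mul_const (inner ℝ (g x) d : ℝ)
      exact ha.add hb
    exact h4.sub h3
  have hmono : MonotoneOn φ (Set.Icc (0 : ℝ) 1) := by
    apply monotoneOn_of_deriv_nonneg (convex_Icc 0 1)
    · exact fun s _ => ((hderiv s).differentiableAt).continuousAt.continuousWithinAt
    · exact fun s _ => ((hderiv s).differentiableAt).differentiableWithinAt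
    · intro s hs
      rw [interior_Icc] at hs
      rw [(hderiv s).deriv]
      have hcs : inner ℝ (g (x + s • d)) d - inner ℝ (g x) d
          ≤ γ * s * ‖d‖ ^ 2 := by
        have h1 : (inner ℝ (g (x + s • d)) d - inner ℝ (g x) d : ℝ)
            = inner ℝ (g (x + s • d) - g x) d := by rw [inner_sub_left]
        rw [h1]
        calc (inner ℝ (g (x + s • d) - g x) d : ℝ)
            ≤ ‖g (x + s • d) - g x‖ * ‖d‖ := real_inner_le_norm _ _
          _ ≤ (γ * ‖x + s • d - x‖) * ‖d‖ := by
              apply mul_le_mul_of_nonneg_right _ (norm_nonneg d)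
              exact hlip _ _
          _ = γ * s * ‖d‖ ^ 2 := by
              have : ‖x + s • d - x‖ = s * ‖d‖ := by
                simp [norm_smul, abs_of_pos hs.1]
              rw [this]; ring
      linarith
  have h01 : φ 0 ≤ φ 1 := hmono (by norm_num) (by norm_num) zero_le_one
  simp only [hφ] at h01
  norm_num at h01
  linarith

/-- Telescoping descent inequality for gradient descent with time-varying loss
functions (from the proof of the convergence theorem). -/
theorem telescoping_descent
    {E : Type*} [NormedAddCommGroup E] [InnerProductSpace ℝ E] [CompleteSpace E]
    (γ : ℝ) (hγ : 0 < γ) (μ : ℝ) (hμ : 0 < μ) (hμγ : μ ≤ 1 / γ)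
    (L : ℕ → E → ℝ) (hL : ∀ t, Differentiable ℝ (L t))
    (hlip : ∀ t, ∀ x y : E, ‖gradient (L t) x - gradient (L t) y‖ ≤ γ * ‖x - y‖)
    (v : ℕ → E) (θ : ℕ → E)
    (hθ : ∀ t, θ (t + 1) = θ t - μ • v t)
    (hmono : ∀ t, L (t + 1) (θ (t + 1)) ≤ L t (θ (t + 1)))
    (T : ℕ) (hT : 1 ≤ T) :
    L T (θ T) - L 0 (θ 0) ≤
      -(μ / 2) * ∑ t ∈ Finset.range T,
        (‖gradient (L t) (θ t)‖ ^ 2 - ‖v t - gradient (L t) (θ t)‖ ^ 2) := by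
  have hstep : ∀ t : ℕ, L t (θ (t + 1)) - L t (θ t)
      ≤ -(μ / 2) * (‖gradient (L t) (θ t)‖ ^ 2 - ‖v t - gradient (L t) (θ t)‖ ^ 2) := by
    intro t
    set g := gradient (L t) (θ t) with hg
    have hd : θ (t + 1) = θ t + (-μ) • v t := by
      rw [hθ t]; rw [neg_smul]; abel
    have h1 : L t (θ (t + 1)) ≤ L t (θ t) + inner ℝ g ((-μ) • v t)
        + γ / 2 * ‖(-μ) • v t‖ ^ 2 := by
      rw [hd]
      exact descent_lemma γ hγ.le (L t) (hL t) (hlip t) (θ t) _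
    have h2 : (inner ℝ g ((-μ) • v t) : ℝ) = -μ * inner ℝ g (v t) := by
      rw [real_inner_smul_right]
    have h3 : ‖(-μ) • v t‖ ^ 2 = μ ^ 2 * ‖v t‖ ^ 2 := by
      rw [norm_smul]
      simp [abs_of_pos hμ, mul_pow]
    have h4 : γ / 2 * (μ ^ 2 * ‖v t‖ ^ 2) ≤ μ / 2 * ‖v t‖ ^ 2 := by
      have hγμ : γ * μ ≤ 1 := by
        rw [le_div_iff₀ hγ] at hμγ
        linarith
      nlinarith [sq_nonneg ‖v t‖, hμ.le]
    have h5 : ‖v t - g‖ ^ 2 = ‖v t‖ ^ 2 - 2 * inner ℝ g (v t) + ‖g‖ ^ 2 := by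
      rw [norm_sub_sq_real, real_inner_comm]
    have key : -μ * inner ℝ g (v t) + μ / 2 * ‖v t‖ ^ 2
        = -(μ / 2) * (‖g‖ ^ 2 - ‖v t - g‖ ^ 2) := by
      rw [h5]; ring
    rw [h2, h3] at h1
    linarith
  clear hT
  induction T with
  | zero => simp
  | succ T ih =>
    have h1 : L (T + 1) (θ (T + 1)) ≤ L T (θ (T + 1)) := hmono T
    have h2 := hstep T
    rw [Finset.sum_range_succ]
    set S := ∑ t ∈ Finset.range T,
      (‖gradient (L t) (θ t)‖ ^ 2 - ‖v t - gradient (L t) (θ t)‖ ^ 2)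
    have := ih
    nlinarith [ih]
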